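/- arXiv:2408.04357 — 3 statements merged into one kernel-verified Lean document; each statement's English description precedes it below -/
import Mathlib

section
/- Let K_1,...,K_n be entrywise nonnegative N×N matrices and α ∈ [0,1]. Then r(S_α(K_1) ··· S_α(K_n)) ≤ r(K_1 ··· K_n)^α · r(K_n ··· K_1)^{1−α}, where r is the spectral radius and S_α(K)_{ij} = k_{ij}^α k_{ji}^{1−α}. -/
open scoped ENNReal NNReal
open Filter Matrix

/-- The spectral radius of a real matrix (largest modulus of a complex eigenvalue). -/
noncomputable def specRad {N : ℕ} (A : Matrix (Fin N) (Fin N) ℝ) : ℝ :=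
  (spectralRadius ℂ (A.map (Complex.ofReal))).toReal

/-- The weighted geometric symmetrization `S_α(K)` with entries `k_{ij}^α k_{ji}^{1-α}`. -/
noncomputable def wgs {N : ℕ} (α : ℝ) (K : Matrix (Fin N) (Fin N) ℝ) :
    Matrix (Fin N) (Fin N) ℝ :=
  Matrix.of fun i j => K i j ^ α * K j i ^ (1 - α)

namespace SpecRadAux

/-- Hölder: `∑ aᵢ^α bᵢ^(1-α) ≤ (∑ aᵢ)^α (∑ bᵢ)^(1-α)` for nonneg reals, `α ∈ [0,1]`. -/
lemma holder_sum {ι : Type*} (s : Finset ι) {α : ℝ} (hα0 : 0 ≤ α) (hα1 : α ≤ 1)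
    (a b : ι → ℝ) (ha : ∀ i ∈ s, 0 ≤ a i) (hb : ∀ i ∈ s, 0 ≤ b i) :
    ∑ i ∈ s, a i ^ α * b i ^ (1 - α) ≤ (∑ i ∈ s, a i) ^ α * (∑ i ∈ s, b i) ^ (1 - α) := by
  rcases eq_or_lt_of_le hα0 with h0 | h0
  · simp only [← h0, Real.rpow_zero, sub_zero, Real.rpow_one, one_mul]
    exact le_refl _
  rcases eq_or_lt_of_le hα1 with h1 | h1
  · simp only [h1, Real.rpow_one, sub_self, Real.rpow_zero, mul_one]
    exact le_refl _
  · have hα1' : (0:ℝ) < 1 - α := by linarith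
    have hpq : (1/α).HolderConjugate (1/(1-α)) := by
      rw [Real.holderConjugate_iff]
      constructor
      · rw [lt_div_iff₀ h0]; linarith
      · simp only [one_div, inv_inv]; ring
    have H := Real.inner_le_Lp_mul_Lq_of_nonneg s hpq
      (f := fun i => a i ^ α) (g := fun i => b i ^ (1 - α))
      (fun i hi => Real.rpow_nonneg (ha i hi) _)
      (fun i hi => Real.rpow_nonneg (hb i hi) _)
    have e1 : ∑ i ∈ s, (a i ^ α) ^ (1/α) = ∑ i ∈ s, a i :=
      Finset.sum_congr rfl fun i hi => by
        rw [← Real.rpow_mul (ha i hi), mul_one_div_cancel h0.ne', Real.rpow_one]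
    have e2 : ∑ i ∈ s, (b i ^ (1-α)) ^ (1/(1-α)) = ∑ i ∈ s, b i :=
      Finset.sum_congr rfl fun i hi => by
        rw [← Real.rpow_mul (hb i hi), mul_one_div_cancel hα1'.ne', Real.rpow_one]
    rw [e1, e2, one_div_one_div, one_div_one_div] at H
    exact H

variable {N : ℕ}

lemma one_entry_nonneg (i j : Fin N) : (0:ℝ) ≤ (1 : Matrix (Fin N) (Fin N) ℝ) i j := by
  rw [Matrix.one_apply]
  split <;> norm_num

lemma mul_entry_nonneg {A B : Matrix (Fin N) (Fin N) ℝ} (hA : ∀ i j, 0 ≤ A i j)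
    (hB : ∀ i j, 0 ≤ B i j) : ∀ i j, 0 ≤ (A * B) i j := fun i j => by
  rw [Matrix.mul_apply]
  exact Finset.sum_nonneg fun k _ => mul_nonneg (hA i k) (hB k j)

lemma prod_entry_nonneg : ∀ (L : List (Matrix (Fin N) (Fin N) ℝ)),
    (∀ M ∈ L, ∀ i j, 0 ≤ M i j) → ∀ i j, 0 ≤ L.prod i j
  | [], _ => by simpa using one_entry_nonneg
  | M :: L, h => by
    rw [List.prod_cons]
    exact mul_entry_nonneg (h M (List.mem_cons_self))
      (prod_entry_nonneg L fun M' hM' => h M' (List.mem_cons_of_mem _ hM'))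

lemma pow_entry_nonneg {A : Matrix (Fin N) (Fin N) ℝ} (hA : ∀ i j, 0 ≤ A i j) (m : ℕ) :
    ∀ i j, 0 ≤ (A ^ m) i j := by
  induction m with
  | zero => simpa using one_entry_nonneg
  | succ m ih => rw [pow_succ]; exact mul_entry_nonneg ih hA

lemma wgs_entry_nonneg {α : ℝ} {K : Matrix (Fin N) (Fin N) ℝ} (hK : ∀ i j, 0 ≤ K i j) :
    ∀ i j, 0 ≤ wgs α K i j := fun i j =>
  mul_nonneg (Real.rpow_nonneg (hK i j) _) (Real.rpow_nonneg (hK j i) _)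

/-- Key entrywise bound by induction on the list. -/
lemma prod_wgs_entry_le {α : ℝ} (hα0 : 0 ≤ α) (hα1 : α ≤ 1) :
    ∀ (L : List (Matrix (Fin N) (Fin N) ℝ)), (∀ M ∈ L, ∀ i j, 0 ≤ M i j) →
    ∀ i j, (L.map (wgs α)).prod i j ≤ (L.prod i j) ^ α * (L.reverse.prod j i) ^ (1 - α)
  | [], _, i, j => by
    simp only [List.map_nil, List.prod_nil, List.reverse_nil]
    rcases eq_or_ne i j with rfl | hij
    · simp [Matrix.one_apply_eq]
    · rw [Matrix.one_apply_ne hij, Matrix.one_apply_ne (Ne.symm hij)]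
      exact mul_nonneg (Real.rpow_nonneg le_rfl _) (Real.rpow_nonneg le_rfl _)
  | M :: L, h, i, j => by
    have hM : ∀ i j, 0 ≤ M i j := h M (List.mem_cons_self)
    have hL : ∀ M' ∈ L, ∀ i j, 0 ≤ M' i j := fun M' hM' => h M' (List.mem_cons_of_mem _ hM')
    have hA' : ∀ i j, 0 ≤ L.prod i j := prod_entry_nonneg L hL
    have hB' : ∀ i j, 0 ≤ L.reverse.prod i j := prod_entry_nonneg L.reverse fun M' hM' =>
      hL M' (List.mem_reverse.mp hM')
    rw [List.map_cons, List.prod_cons, List.reverse_cons]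
    simp only [List.prod_append, List.prod_cons, List.prod_nil, mul_one]
    rw [Matrix.mul_apply]
    calc ∑ k, wgs α M i k * (L.map (wgs α)).prod k j
        ≤ ∑ k, (M i k * L.prod k j) ^ α * (M k i * L.reverse.prod j k) ^ (1 - α) := by
          refine Finset.sum_le_sum fun k _ => ?_
          have step : wgs α M i k * (L.map (wgs α)).prod k j ≤
              (M i k ^ α * M k i ^ (1 - α)) * ((L.prod k j) ^ α * (L.reverse.prod j k) ^ (1 - α)) :=
            mul_le_mul_of_nonneg_left (prod_wgs_entry_le hα0 hα1 L hL k j)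
              (wgs_entry_nonneg hM i k)
          refine step.trans (le_of_eq ?_)
          rw [Real.mul_rpow (hM i k) (hA' k j), Real.mul_rpow (hM k i) (hB' j k)]
          ring
      _ ≤ (∑ k, M i k * L.prod k j) ^ α * (∑ k, M k i * L.reverse.prod j k) ^ (1 - α) :=
          holder_sum _ hα0 hα1 _ _ (fun k _ => mul_nonneg (hM i k) (hA' k j))
            (fun k _ => mul_nonneg (hM k i) (hB' j k))
      _ = ((M * L.prod) i j) ^ α * ((L.reverse.prod * M) j i) ^ (1 - α) := by
          rw [Matrix.mul_apply, Matrix.mul_apply]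
          congr 1
          congr 1
          exact Finset.sum_congr rfl fun k _ => mul_comm _ _


attribute [local instance] Matrix.linftyOpNormedRing Matrix.linftyOpNormedAlgebra

example : CompleteSpace (Matrix (Fin N) (Fin N) ℂ) := by infer_instance

lemma nnnorm_le_of_entry_le {α : ℝ} (hα0 : 0 ≤ α) (hα1 : α ≤ 1)
    {X A C : Matrix (Fin N) (Fin N) ℝ}
    (hX0 : ∀ i j, 0 ≤ X i j) (hA0 : ∀ i j, 0 ≤ A i j) (hC0 : ∀ i j, 0 ≤ C i j)
    (hb : ∀ i j, X i j ≤ A i j ^ α * C i j ^ (1 - α)) :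
    ‖X‖₊ ≤ ‖A‖₊ ^ α * ‖C‖₊ ^ (1 - α) := by
  have coe_eq : ∀ (M : Matrix (Fin N) (Fin N) ℝ), (∀ i j, 0 ≤ M i j) → ∀ i,
      ((∑ j, ‖M i j‖₊ : ℝ≥0) : ℝ) = ∑ j, M i j := by
    intro M h0 i
    rw [NNReal.coe_sum]
    exact Finset.sum_congr rfl fun j _ => by
      rw [coe_nnnorm, Real.norm_eq_abs, abs_of_nonneg (h0 i j)]
  rw [Matrix.linfty_opNNNorm_def, Matrix.linfty_opNNNorm_def, Matrix.linfty_opNNNorm_def]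
  refine Finset.sup_le fun i _ => ?_
  · have row : (∑ j, ‖X i j‖₊) ≤ (∑ j, ‖A i j‖₊) ^ α * (∑ j, ‖C i j‖₊) ^ (1 - α) := by
      rw [← NNReal.coe_le_coe, NNReal.coe_mul, NNReal.coe_rpow, NNReal.coe_rpow,
        coe_eq X hX0, coe_eq A hA0, coe_eq C hC0]
      calc ∑ j, X i j ≤ ∑ j, A i j ^ α * C i j ^ (1 - α) :=
            Finset.sum_le_sum fun j _ => hb i j
        _ ≤ _ := holder_sum _ hα0 hα1 _ _ (fun j _ => hA0 i j) (fun j _ => hC0 i j)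
    refine row.trans (mul_le_mul' (NNReal.rpow_le_rpow ?_ hα0)
      (NNReal.rpow_le_rpow ?_ (by linarith)))
    · exact Finset.le_sup (f := fun i => ∑ j, ‖A i j‖₊) (Finset.mem_univ i)
    · exact Finset.le_sup (f := fun i => ∑ j, ‖C i j‖₊) (Finset.mem_univ i)

lemma nnnorm_map_ofReal (X : Matrix (Fin N) (Fin N) ℝ) :
    ‖X.map (Complex.ofReal)‖₊ = ‖X‖₊ := by
  rw [Matrix.linfty_opNNNorm_def, Matrix.linfty_opNNNorm_def]
  congr 1
  funext i
  congr 1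
  funext j
  simp [Matrix.map_apply]

lemma map_ofReal_pow (X : Matrix (Fin N) (Fin N) ℝ) (m : ℕ) :
    (X.map (Complex.ofReal)) ^ m = (X ^ m).map (Complex.ofReal) := by
  have h := map_pow (Complex.ofRealHom.mapMatrix (m := Fin N)) X m
  simp only [RingHom.mapMatrix_apply] at h
  exact h.symm

lemma spectralRadius_transpose (M : Matrix (Fin N) (Fin N) ℂ) :
    spectralRadius ℂ Mᵀ = spectralRadius ℂ M := by
  have hs : spectrum ℂ Mᵀ = spectrum ℂ M := by
    ext z
    have ht : algebraMap ℂ (Matrix (Fin N) (Fin N) ℂ) z - Mᵀ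
        = (algebraMap ℂ (Matrix (Fin N) (Fin N) ℂ) z - M)ᵀ := by
      rw [Matrix.transpose_sub]
      congr 1
      rw [Algebra.algebraMap_eq_smul_one, Matrix.transpose_smul, Matrix.transpose_one]
    simp only [spectrum.mem_iff, ht, Matrix.isUnit_iff_isUnit_det, Matrix.det_transpose]
  simp only [spectralRadius, hs]

lemma spectralRadius_ne_top (X : Matrix (Fin N) (Fin N) ℂ) :
    spectralRadius ℂ X ≠ ⊤ := by
  have h := spectrum.spectralRadius_le_pow_nnnorm_pow_one_div ℂ X 0
  refine ne_top_of_le_ne_top ?_ h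
  exact ENNReal.mul_ne_top
    (ENNReal.rpow_ne_top_of_nonneg (by norm_num) ENNReal.coe_ne_top)
    (ENNReal.rpow_ne_top_of_nonneg (by norm_num) ENNReal.coe_ne_top)

lemma nnnorm_one_le : (‖(1 : Matrix (Fin N) (Fin N) ℂ)‖₊ : ℝ≥0∞) ≤ 1 := by
  rw [Matrix.linfty_opNNNorm_def]
  norm_cast
  refine Finset.sup_le fun i _ => ?_
  have : ∑ j, ‖(1 : Matrix (Fin N) (Fin N) ℂ) i j‖₊ = 1 := by
    simp [Matrix.one_apply, apply_ite (fun z : ℂ => ‖z‖₊)]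
  rw [this]


lemma pow_prod_wgs_entry_le {α : ℝ} (hα0 : 0 ≤ α) (hα1 : α ≤ 1)
    (L : List (Matrix (Fin N) (Fin N) ℝ)) (hL : ∀ M ∈ L, ∀ i j, 0 ≤ M i j) (m : ℕ)
    (i j : Fin N) :
    ((L.map (wgs α)).prod ^ m) i j ≤
      ((L.prod ^ m) i j) ^ α * ((L.reverse.prod ^ m) j i) ^ (1 - α) := by
  set Lm := (List.replicate m L).flatten with hLm
  have hmem : ∀ M ∈ Lm, ∀ i j, 0 ≤ M i j := by
    intro M hM
    rw [hLm, List.mem_flatten] at hM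
    obtain ⟨l, hl, hMl⟩ := hM
    exact hL M (List.eq_of_mem_replicate hl ▸ hMl)
  have e1 : Lm.prod = L.prod ^ m := by
    rw [hLm, List.prod_flatten, List.map_replicate, List.prod_replicate]
  have e2 : Lm.reverse.prod = L.reverse.prod ^ m := by
    rw [hLm, List.reverse_flatten, List.map_replicate, List.reverse_replicate,
      List.prod_flatten, List.map_replicate, List.prod_replicate]
  have e3 : (Lm.map (wgs α)).prod = (L.map (wgs α)).prod ^ m := by
    rw [hLm, List.map_flatten, List.map_replicate, List.prod_flatten,
      List.map_replicate, List.prod_replicate]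
  have h := prod_wgs_entry_le hα0 hα1 Lm hmem i j
  rwa [e1, e2, e3] at h

end SpecRadAux

attribute [local instance] Matrix.linftyOpNormedRing Matrix.linftyOpNormedAlgebra

open SpecRadAux Filter Matrix Topology

/-- `r(S_α(K₁) ⋯ S_α(Kₙ)) ≤ r(K₁ ⋯ Kₙ)^α * r(Kₙ ⋯ K₁)^{1-α}`. -/
theorem specRad_prod_wgs_le {N n : ℕ} (K : Fin n → Matrix (Fin N) (Fin N) ℝ)
    (hK : ∀ i x y, 0 ≤ K i x y) (α : ℝ) (hα0 : 0 ≤ α) (hα1 : α ≤ 1) :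
    specRad (List.ofFn (fun i => wgs α (K i))).prod ≤
      specRad (List.ofFn K).prod ^ α * specRad (List.ofFn K).reverse.prod ^ (1 - α) := by
  classical
  have hα1' : (0:ℝ) ≤ 1 - α := by linarith
  set L := List.ofFn K with hLdef
  have hL : ∀ M ∈ L, ∀ i j, 0 ≤ M i j := by
    intro M hM
    rw [hLdef, List.mem_ofFn] at hM
    obtain ⟨i, rfl⟩ := hM
    exact hK i
  have hgoalL : List.ofFn (fun i => wgs α (K i)) = L.map (wgs α) := by
    rw [hLdef, List.map_ofFn]
    rfl
  rw [hgoalL]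
  set P := (L.map (wgs α)).prod with hPdef
  set A := L.prod with hAdef
  set B := L.reverse.prod with hBdef
  set C := Bᵀ with hCdef
  have hA0 : ∀ i j, 0 ≤ A i j := prod_entry_nonneg L hL
  have hB0 : ∀ i j, 0 ≤ B i j :=
    prod_entry_nonneg _ fun M hM => hL M (List.mem_reverse.mp hM)
  have hC0 : ∀ i j, 0 ≤ C i j := fun i j => hB0 j i
  have hP0 : ∀ i j, 0 ≤ P i j := by
    refine prod_entry_nonneg _ fun M hM => ?_
    rw [List.mem_map] at hM
    obtain ⟨M0, h0, rfl⟩ := hM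
    exact wgs_entry_nonneg (hL M0 h0)
  -- norm bound for each power
  have hnn : ∀ m : ℕ, ‖P ^ m‖₊ ≤ ‖A ^ m‖₊ ^ α * ‖C ^ m‖₊ ^ (1 - α) := by
    intro m
    refine nnnorm_le_of_entry_le hα0 hα1 (pow_entry_nonneg hP0 m)
      (pow_entry_nonneg hA0 m) (pow_entry_nonneg hC0 m) ?_
    intro i j
    have h := pow_prod_wgs_entry_le hα0 hα1 L hL m i j
    have hCm : (C ^ m) i j = (B ^ m) j i := by
      rw [hCdef, ← Matrix.transpose_pow, Matrix.transpose_apply]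
    rw [hCm]
    exact h
  -- complex versions
  set Pc := P.map Complex.ofReal with hPcdef
  set Ac := A.map Complex.ofReal with hAcdef
  set Cc := C.map Complex.ofReal with hCcdef
  have hPc : ∀ m : ℕ, ‖Pc ^ m‖₊ = ‖P ^ m‖₊ := fun m => by
    rw [hPcdef, map_ofReal_pow, nnnorm_map_ofReal]
  have hAc : ∀ m : ℕ, ‖Ac ^ m‖₊ = ‖A ^ m‖₊ := fun m => by
    rw [hAcdef, map_ofReal_pow, nnnorm_map_ofReal]
  have hCc : ∀ m : ℕ, ‖Cc ^ m‖₊ = ‖C ^ m‖₊ := fun m => by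
    rw [hCcdef, map_ofReal_pow, nnnorm_map_ofReal]
  have swap : ∀ (x : ℝ≥0∞) (s e : ℝ), (x ^ s) ^ e = (x ^ e) ^ s := fun x s e => by
    rw [← ENNReal.rpow_mul, ← ENNReal.rpow_mul, mul_comm]
  -- per-m key bound
  have key : ∀ nn : ℕ, spectralRadius ℂ Pc ≤
      ((‖Ac ^ (nn+1)‖₊ : ℝ≥0∞) ^ (1/((nn:ℝ)+1))) ^ α *
        ((‖Cc ^ (nn+1)‖₊ : ℝ≥0∞) ^ (1/((nn:ℝ)+1))) ^ (1-α) := by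
    intro nn
    have he : (0:ℝ) ≤ 1/((nn:ℝ)+1) := by positivity
    have h1 := spectrum.spectralRadius_le_pow_nnnorm_pow_one_div ℂ Pc nn
    have h2 : (‖(1 : Matrix (Fin N) (Fin N) ℂ)‖₊ : ℝ≥0∞) ^ (1/((nn:ℝ)+1)) ≤ 1 :=
      ENNReal.rpow_le_one nnnorm_one_le he
    calc spectralRadius ℂ Pc
        ≤ (‖Pc ^ (nn+1)‖₊ : ℝ≥0∞) ^ (1/((nn:ℝ)+1)) *
            (‖(1 : Matrix (Fin N) (Fin N) ℂ)‖₊ : ℝ≥0∞) ^ (1/((nn:ℝ)+1)) := h1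
      _ ≤ (‖Pc ^ (nn+1)‖₊ : ℝ≥0∞) ^ (1/((nn:ℝ)+1)) * 1 := mul_le_mul' le_rfl h2
      _ = (‖Pc ^ (nn+1)‖₊ : ℝ≥0∞) ^ (1/((nn:ℝ)+1)) := mul_one _
      _ ≤ ((‖Ac ^ (nn+1)‖₊ ^ α * ‖Cc ^ (nn+1)‖₊ ^ (1-α) : ℝ≥0) : ℝ≥0∞) ^ (1/((nn:ℝ)+1)) := by
          refine ENNReal.rpow_le_rpow ?_ he
          rw [hPc]
          exact_mod_cast (hnn (nn+1)).trans_eq (by rw [hAc, hCc])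
      _ = _ := by
          rw [ENNReal.coe_mul, ENNReal.coe_rpow_of_nonneg _ hα0,
            ENNReal.coe_rpow_of_nonneg _ hα1', ENNReal.mul_rpow_of_nonneg _ _ he,
            swap _ α _, swap _ (1-α) _]
  -- Gelfand limits
  have gA := spectrum.pow_nnnorm_pow_one_div_tendsto_nhds_spectralRadius Ac
  have gC := spectrum.pow_nnnorm_pow_one_div_tendsto_nhds_spectralRadius Cc
  have tA : Tendsto (fun m : ℕ => ((‖Ac ^ m‖₊ : ℝ≥0∞) ^ (1/(m:ℝ))) ^ α) atTop
      (𝓝 ((spectralRadius ℂ Ac) ^ α)) :=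
    ((ENNReal.continuous_rpow_const (y := α)).tendsto _).comp gA
  have tC : Tendsto (fun m : ℕ => ((‖Cc ^ m‖₊ : ℝ≥0∞) ^ (1/(m:ℝ))) ^ (1-α)) atTop
      (𝓝 ((spectralRadius ℂ Cc) ^ (1-α))) :=
    ((ENNReal.continuous_rpow_const (y := 1-α)).tendsto _).comp gC
  have tmul := ENNReal.Tendsto.mul tA
    (Or.inr (ENNReal.rpow_ne_top_of_nonneg hα1' (spectralRadius_ne_top Cc))) tC
    (Or.inr (ENNReal.rpow_ne_top_of_nonneg hα0 (spectralRadius_ne_top Ac)))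
  have main : spectralRadius ℂ Pc ≤
      spectralRadius ℂ Ac ^ α * spectralRadius ℂ Cc ^ (1-α) := by
    refine ge_of_tendsto tmul ?_
    rw [Filter.eventually_atTop]
    refine ⟨1, fun m hm => ?_⟩
    obtain ⟨nn, rfl⟩ : ∃ k, m = k + 1 := ⟨m - 1, by omega⟩
    have h := key nn
    simpa [Nat.cast_add, Nat.cast_one] using h
  -- transpose identification
  have hCB : spectralRadius ℂ Cc = spectralRadius ℂ (B.map Complex.ofReal) := by
    have : Cc = (B.map Complex.ofReal)ᵀ := by
      rw [hCcdef, hCdef, Matrix.transpose_map]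
    rw [this, spectralRadius_transpose]
  -- conclude
  show (spectralRadius ℂ Pc).toReal ≤
    (spectralRadius ℂ Ac).toReal ^ α * (spectralRadius ℂ (B.map Complex.ofReal)).toReal ^ (1-α)
  calc (spectralRadius ℂ Pc).toReal
      ≤ (spectralRadius ℂ Ac ^ α * spectralRadius ℂ Cc ^ (1-α)).toReal :=
        ENNReal.toReal_mono
          (ENNReal.mul_ne_top (ENNReal.rpow_ne_top_of_nonneg hα0 (spectralRadius_ne_top Ac))
            (ENNReal.rpow_ne_top_of_nonneg hα1' (spectralRadius_ne_top Cc))) main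
    _ = _ := by
        rw [ENNReal.toReal_mul, ← ENNReal.toReal_rpow, ← ENNReal.toReal_rpow, hCB]
end

section
/- Let K_1,...,K_n be entrywise nonnegative N×N matrices and α ∈ [0,1]. Then r(S_α(K_1) + ··· + S_α(K_n)) ≤ r(K_1 + ··· + K_n), where r is the spectral radius and S_α(K)_{ij} = k_{ij}^α k_{ji}^{1−α}. -/
open Finset Matrix Filter

lemma hoelder_sum {ι : Type*} (s : Finset ι) (a b : ι → ℝ) (ha : ∀ i, 0 ≤ a i)
    (hb : ∀ i, 0 ≤ b i) {α : ℝ} (hα0 : 0 ≤ α) (hα1 : α ≤ 1) :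
    ∑ i ∈ s, a i ^ α * b i ^ (1 - α) ≤ (∑ i ∈ s, a i) ^ α * (∑ i ∈ s, b i) ^ (1 - α) := by
  rcases eq_or_lt_of_le hα0 with h0 | h0
  · simp [← h0]
  rcases eq_or_lt_of_le hα1 with h1 | h1
  · simp [h1]
  have h1' : 0 < 1 - α := by linarith
  have hpq : Real.HolderConjugate α⁻¹ (1 - α)⁻¹ := by
    rw [Real.holderConjugate_iff]
    constructor
    · exact (one_lt_inv₀ h0).mpr h1
    · rw [inv_inv, inv_inv]; ring
  have := Real.inner_le_Lp_mul_Lq_of_nonneg s (f := fun i => a i ^ α)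
    (g := fun i => b i ^ (1 - α)) hpq (fun i _ => Real.rpow_nonneg (ha i) _)
    (fun i _ => Real.rpow_nonneg (hb i) _)
  calc ∑ i ∈ s, a i ^ α * b i ^ (1 - α)
      ≤ (∑ i ∈ s, (a i ^ α) ^ α⁻¹) ^ (1 / α⁻¹) * (∑ i ∈ s, (b i ^ (1-α)) ^ (1-α)⁻¹) ^ (1 / (1-α)⁻¹) := this
    _ = (∑ i ∈ s, a i) ^ α * (∑ i ∈ s, b i) ^ (1 - α) := by
        rw [one_div, inv_inv, one_div, inv_inv]
        congr 1
        · congr 1; apply Finset.sum_congr rfl; intro i _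
          rw [← Real.rpow_mul (ha i), mul_inv_cancel₀ h0.ne', Real.rpow_one]
        · congr 1; apply Finset.sum_congr rfl; intro i _
          rw [← Real.rpow_mul (hb i), mul_inv_cancel₀ h1'.ne', Real.rpow_one]

section
variable {N n : ℕ} {α : ℝ}

/-- entries of powers of an entrywise-nonneg matrix are nonneg -/
lemma pow_entry_nonneg (M : Matrix (Fin N) (Fin N) ℝ) (hM : ∀ i j, 0 ≤ M i j) (m : ℕ) :
    ∀ i j, 0 ≤ (M ^ m) i j := by
  induction m with
  | zero => intro i j; simp [Matrix.one_apply]; split <;> norm_num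
  | succ m ih =>
    intro i j
    rw [pow_succ, Matrix.mul_apply]
    exact Finset.sum_nonneg fun k _ => mul_nonneg (ih i k) (hM k j)

lemma wgs_entry_nonneg (K : Matrix (Fin N) (Fin N) ℝ) (hK : ∀ i j, 0 ≤ K i j)
    (i j : Fin N) : 0 ≤ wgs α K i j :=
  mul_nonneg (Real.rpow_nonneg (hK i j) _) (Real.rpow_nonneg (hK j i) _)

/-- Step B: sum of symmetrizations is entrywise at most symmetrization of the sum. -/
lemma sum_wgs_le (K : Fin n → Matrix (Fin N) (Fin N) ℝ) (hK : ∀ i x y, 0 ≤ K i x y)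
    (hα0 : 0 ≤ α) (hα1 : α ≤ 1) (x y : Fin N) :
    (∑ i, wgs α (K i)) x y ≤ wgs α (∑ i, K i) x y := by
  have h := hoelder_sum Finset.univ (fun i => K i x y) (fun i => K i y x)
    (fun i => hK i x y) (fun i => hK i y x) hα0 hα1
  simpa [wgs, Matrix.sum_apply] using h

end

section
variable {N n : ℕ} {α : ℝ}

/-- Step C: entrywise bound on powers of the symmetrization. -/
lemma wgs_pow_le (M : Matrix (Fin N) (Fin N) ℝ) (hM : ∀ i j, 0 ≤ M i j)
    (hα0 : 0 ≤ α) (hα1 : α ≤ 1) (m : ℕ) :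
    ∀ i j, ((wgs α M) ^ m) i j ≤ ((M ^ m) i j) ^ α * ((M ^ m) j i) ^ (1 - α) := by
  induction m with
  | zero =>
    intro i j
    by_cases h : i = j
    · subst h; simp [Matrix.one_apply]
    · simp only [pow_zero, Matrix.one_apply_ne h, Matrix.one_apply_ne (Ne.symm h)]
      exact mul_nonneg (Real.rpow_nonneg le_rfl _) (Real.rpow_nonneg le_rfl _)
  | succ m ih =>
    intro i j
    have hMm := pow_entry_nonneg M hM m
    calc ((wgs α M) ^ (m+1)) i j = ∑ k, ((wgs α M)^m) i k * (wgs α M) k j := by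
          rw [pow_succ, Matrix.mul_apply]
      _ ≤ ∑ k, (((M^m) i k)^α * ((M^m) k i)^(1-α)) * ((M k j)^α * (M j k)^(1-α)) := by
          apply Finset.sum_le_sum
          intro k _
          exact mul_le_mul (ih i k) le_rfl (wgs_entry_nonneg M hM k j)
            (mul_nonneg (Real.rpow_nonneg (hMm i k) _) (Real.rpow_nonneg (hMm k i) _))
      _ = ∑ k, ((M^m) i k * M k j)^α * ((M^m) k i * M j k)^(1-α) := by
          apply Finset.sum_congr rfl
          intro k _
          rw [Real.mul_rpow (hMm i k) (hM k j), Real.mul_rpow (hMm k i) (hM j k)]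
          ring
      _ ≤ (∑ k, (M^m) i k * M k j)^α * (∑ k, (M^m) k i * M j k)^(1-α) :=
          hoelder_sum Finset.univ _ _ (fun k => mul_nonneg (hMm i k) (hM k j))
            (fun k => mul_nonneg (hMm k i) (hM j k)) hα0 hα1
      _ = ((M ^ (m+1)) i j) ^ α * ((M ^ (m+1)) j i) ^ (1 - α) := by
          have h1 : (∑ k, (M^m) i k * M k j) = (M ^ (m+1)) i j := by
            rw [pow_succ, Matrix.mul_apply]
          have h2 : (∑ k, (M^m) k i * M j k) = (M ^ (m+1)) j i := by
            rw [pow_succ', Matrix.mul_apply]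
            apply Finset.sum_congr rfl; intro k _; ring
          rw [h1, h2]

end

attribute [local instance] Matrix.linftyOpNormedRing Matrix.linftyOpNormedAlgebra

section
variable {N n : ℕ} {α : ℝ}
open scoped NNReal ENNReal Topology

lemma entry_nnnorm_le_nnnorm (X : Matrix (Fin N) (Fin N) ℝ) (i j : Fin N) :
    ‖X i j‖₊ ≤ ‖X.map (Complex.ofReal)‖₊ := by
  rw [Matrix.linfty_opNNNorm_def]
  refine le_trans ?_ (Finset.le_sup (Finset.mem_univ i))
  calc ‖X i j‖₊ = ‖(X.map Complex.ofReal) i j‖₊ := by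
        simp [Matrix.map_apply]
    _ ≤ ∑ k, ‖(X.map Complex.ofReal) i k‖₊ :=
        Finset.single_le_sum (f := fun k => ‖(X.map Complex.ofReal) i k‖₊)
          (fun k _ => zero_le) (Finset.mem_univ j)

lemma nnnorm_le_card_mul (X : Matrix (Fin N) (Fin N) ℝ) (d : ℝ≥0)
    (h : ∀ i j, ‖X i j‖₊ ≤ d) : ‖X.map (Complex.ofReal)‖₊ ≤ N * d := by
  rw [Matrix.linfty_opNNNorm_def]
  apply Finset.sup_le
  intro i _
  calc ∑ k, ‖(X.map Complex.ofReal) i k‖₊ ≤ ∑ _k : Fin N, d := by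
        apply Finset.sum_le_sum
        intro k _
        simpa [Matrix.map_apply] using h i k
    _ = N * d := by simp [Finset.sum_const, nsmul_eq_mul]

lemma pow_le_pow_entrywise (A B : Matrix (Fin N) (Fin N) ℝ) (hA : ∀ i j, 0 ≤ A i j)
    (hAB : ∀ i j, A i j ≤ B i j) (m : ℕ) : ∀ i j, (A ^ m) i j ≤ (B ^ m) i j := by
  have hB : ∀ i j, 0 ≤ B i j := fun i j => (hA i j).trans (hAB i j)
  induction m with
  | zero => intro i j; simp
  | succ m ih =>
    intro i j
    rw [pow_succ, pow_succ, Matrix.mul_apply, Matrix.mul_apply]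
    apply Finset.sum_le_sum
    intro k _
    exact mul_le_mul (ih i k) (hAB k j) (hA k j) (pow_entry_nonneg B hB m i k)

open Filter in
lemma specRad_le_of_nnnorm_pow_le (hN : N ≠ 0) (A B : Matrix (Fin N) (Fin N) ℝ)
    (c : ℝ≥0) (hc : c ≠ 0)
    (h : ∀ m : ℕ, ‖(A ^ m).map (Complex.ofReal)‖₊ ≤ c * ‖(B ^ m).map (Complex.ofReal)‖₊) :
    specRad A ≤ specRad B := by
  haveI : Nonempty (Fin N) := Fin.pos_iff_nonempty.mp (Nat.pos_of_ne_zero hN)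
  haveI : CompleteSpace (Matrix (Fin N) (Fin N) ℂ) :=
    inferInstance
  set aA := A.map Complex.ofReal with haA
  set aB := B.map Complex.ofReal with haB
  have hpowA : ∀ m : ℕ, aA ^ m = (A ^ m).map Complex.ofReal := fun m => by
    exact (map_pow (Complex.ofRealHom.mapMatrix) A m).symm
  have hpowB : ∀ m : ℕ, aB ^ m = (B ^ m).map Complex.ofReal := fun m => by
    exact (map_pow (Complex.ofRealHom.mapMatrix) B m).symm
  have hA := spectrum.pow_nnnorm_pow_one_div_tendsto_nhds_spectralRadius aA
  have hB := spectrum.pow_nnnorm_pow_one_div_tendsto_nhds_spectralRadius aB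
  have hc1 : Tendsto (fun m : ℕ => ((c : ℝ≥0∞) ^ (1 / (m:ℝ)))) atTop (𝓝 1) := by
    have hnn : Tendsto (fun m : ℕ => (c ^ (1 / (m:ℝ)) : ℝ≥0)) atTop (𝓝 1) := by
      have h0 : Tendsto (fun m : ℕ => 1 / (m:ℝ)) atTop (𝓝 0) :=
        tendsto_one_div_atTop_nhds_zero_nat
      have := Filter.Tendsto.nnrpow (tendsto_const_nhds (x := c)) h0 (Or.inl hc)
      simpa using this
    have := (ENNReal.tendsto_coe (f := atTop)).mpr hnn
    refine this.congr fun m => ?_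
    rw [ENNReal.coe_rpow_of_nonneg _ (by positivity)]
  have hBfin : spectralRadius ℂ aB ≠ ⊤ :=
    ((spectrum.spectralRadius_le_nnnorm (𝕜 := ℂ) aB).trans_lt ENNReal.coe_lt_top).ne
  have hmul : Tendsto
      (fun m : ℕ => (c:ℝ≥0∞)^(1/(m:ℝ)) * (‖aB ^ m‖₊ : ℝ≥0∞) ^ (1/(m:ℝ))) atTop
      (𝓝 (spectralRadius ℂ aB)) := by
    have := ENNReal.Tendsto.mul hc1 (Or.inr hBfin) hB (Or.inr ENNReal.one_ne_top)
    simpa using this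
  have hle : ∀ m : ℕ, (‖aA ^ m‖₊ : ℝ≥0∞) ^ (1/(m:ℝ)) ≤
      (c:ℝ≥0∞)^(1/(m:ℝ)) * (‖aB ^ m‖₊ : ℝ≥0∞)^(1/(m:ℝ)) := by
    intro m
    have h' : (‖aA ^ m‖₊ : ℝ≥0∞) ≤ (c:ℝ≥0∞) * ‖aB ^ m‖₊ := by
      rw [hpowA, hpowB]
      exact_mod_cast h m
    calc (‖aA ^ m‖₊ : ℝ≥0∞) ^ (1/(m:ℝ))
        ≤ ((c:ℝ≥0∞) * ‖aB ^ m‖₊)^(1/(m:ℝ)) := ENNReal.rpow_le_rpow h' (by positivity)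
      _ = _ := ENNReal.mul_rpow_of_nonneg _ _ (by positivity)
  exact ENNReal.toReal_mono hBfin (le_of_tendsto_of_tendsto' hA hmul hle)

end

open scoped NNReal

/-- `r(S_α(K₁) + ⋯ + S_α(Kₙ)) ≤ r(K₁ + ⋯ + Kₙ)`. -/
theorem specRad_sum_wgs_le {N n : ℕ} (K : Fin n → Matrix (Fin N) (Fin N) ℝ)
    (hK : ∀ i x y, 0 ≤ K i x y) (α : ℝ) (hα0 : 0 ≤ α) (hα1 : α ≤ 1) :
    specRad (∑ i, wgs α (K i)) ≤ specRad (∑ i, K i) := by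
  rcases Nat.eq_zero_or_pos N with hN | hN
  · subst hN
    have : (∑ i, wgs α (K i)) = (∑ i, K i) := by
      ext i j; exact i.elim0
    rw [this]
  · set S := ∑ i, wgs α (K i) with hS
    set M := ∑ i, K i with hM
    have hMpos : ∀ i j, 0 ≤ M i j := fun i j => by
      rw [hM, Matrix.sum_apply]; exact Finset.sum_nonneg fun k _ => hK k i j
    have hS0 : ∀ i j, 0 ≤ S i j := fun i j => by
      rw [hS, Matrix.sum_apply]
      exact Finset.sum_nonneg fun k _ => wgs_entry_nonneg _ (hK k) i j
    have hSle : ∀ i j, S i j ≤ wgs α M i j := fun i j => sum_wgs_le K hK hα0 hα1 i j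
    apply specRad_le_of_nnnorm_pow_le hN.ne' S M (N : ℝ≥0)
      (by exact_mod_cast hN.ne')
    intro m
    apply nnnorm_le_card_mul
    intro i j
    set d : ℝ≥0 := ‖(M^m).map Complex.ofReal‖₊ with hd
    have hentry : ∀ a b, (M^m) a b ≤ (d:ℝ) := fun a b => by
      have h2 : ‖(M^m) a b‖ ≤ (d:ℝ) := by
        exact_mod_cast entry_nnnorm_le_nnnorm (M^m) a b
      rw [Real.norm_eq_abs] at h2
      exact (le_abs_self _).trans h2
    have h1 : (S^m) i j ≤ (d:ℝ) := by
      calc (S^m) i j ≤ ((wgs α M)^m) i j := pow_le_pow_entrywise S (wgs α M) hS0 hSle m i j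
        _ ≤ ((M^m) i j)^α * ((M^m) j i)^(1-α) := wgs_pow_le M hMpos hα0 hα1 m i j
        _ ≤ (d:ℝ)^α * (d:ℝ)^(1-α) :=
            mul_le_mul (Real.rpow_le_rpow (pow_entry_nonneg M hMpos m i j) (hentry i j) hα0)
              (Real.rpow_le_rpow (pow_entry_nonneg M hMpos m j i) (hentry j i) (by linarith))
              (Real.rpow_nonneg (pow_entry_nonneg M hMpos m j i) _)
              (Real.rpow_nonneg d.coe_nonneg _)
        _ = (d:ℝ) := by
            rw [← Real.rpow_add' d.coe_nonneg (by norm_num)]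
            rw [show α + (1-α) = 1 by ring, Real.rpow_one]
    have h0 : 0 ≤ (S^m) i j := pow_entry_nonneg S hS0 m i j
    rw [← NNReal.coe_le_coe, coe_nnnorm, Real.norm_eq_abs, abs_of_nonneg h0]
    exact h1
end

section
/- Let K_1, K_2 be entrywise nonnegative N×N matrices. The function ρ_2(α) = sqrt( r(S_α(K_1) S_α(K_2)) · r(S_α(K_2) S_α(K_1)) ) is decreasing on [0,1/2] and increasing on [1/2,1], where r is the spectral radius and S_α(K)_{ij} = k_{ij}^α k_{ji}^{1−α}. In particular ρ_2(α) ≥ ρ_2(1/2) for all α ∈ [0,1]. -/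
/-- `ρ₂(α) = √( r(S_α(K₁) S_α(K₂)) · r(S_α(K₂) S_α(K₁)) )`. -/
noncomputable def rho2 {N : ℕ} (K₁ K₂ : Matrix (Fin N) (Fin N) ℝ) (α : ℝ) : ℝ :=
  Real.sqrt (specRad (wgs α K₁ * wgs α K₂) * specRad (wgs α K₂ * wgs α K₁))

namespace Rho2Aux

open Matrix Finset Filter Topology ENNReal

attribute [local instance] Matrix.linftyOpNormedAddCommGroup Matrix.linftyOpNormedRing
  Matrix.linftyOpNormedAlgebra

variable {N : ℕ}

/-- Hölder: `∑ xᵢ^t yᵢ^(1-t) ≤ (∑ xᵢ)^t (∑ yᵢ)^(1-t)`. -/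
lemma sum_rpow_holder {ι : Type*} (s : Finset ι) (x y : ι → ℝ)
    (hx : ∀ i ∈ s, 0 ≤ x i) (hy : ∀ i ∈ s, 0 ≤ y i) {t : ℝ} (ht0 : 0 ≤ t) (ht1 : t ≤ 1) :
    ∑ i ∈ s, x i ^ t * y i ^ (1 - t) ≤ (∑ i ∈ s, x i) ^ t * (∑ i ∈ s, y i) ^ (1 - t) := by
  rcases eq_or_lt_of_le ht0 with h0 | h0
  · simp [← h0]
  rcases eq_or_lt_of_le ht1 with h1 | h1
  · simp [h1]
  have hpq : Real.HolderConjugate (1 / t) (1 / (1 - t)) :=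
    Real.holderConjugate_one_div h0 (by linarith) (by ring)
  have key := Real.inner_le_Lp_mul_Lq_of_nonneg (s := s) (f := fun i => x i ^ t)
    (g := fun i => y i ^ (1 - t)) hpq (fun i hi => Real.rpow_nonneg (hx i hi) t)
    (fun i hi => Real.rpow_nonneg (hy i hi) (1 - t))
  have e1 : ∀ i ∈ s, (x i ^ t) ^ (1 / t : ℝ) = x i := fun i hi => by
    rw [← Real.rpow_mul (hx i hi), mul_one_div_cancel h0.ne', Real.rpow_one]
  have e2 : ∀ i ∈ s, (y i ^ (1 - t)) ^ (1 / (1 - t) : ℝ) = y i := fun i hi => by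
    rw [← Real.rpow_mul (hy i hi), mul_one_div_cancel (by linarith : (1 : ℝ) - t ≠ 0),
      Real.rpow_one]
  rw [Finset.sum_congr rfl e1, Finset.sum_congr rfl e2, one_div_one_div, one_div_one_div] at key
  exact key

lemma mul_entry_nonneg {A B : Matrix (Fin N) (Fin N) ℝ}
    (hA : ∀ i j, 0 ≤ A i j) (hB : ∀ i j, 0 ≤ B i j) : ∀ i j, 0 ≤ (A * B) i j := by
  intro i j
  rw [Matrix.mul_apply]
  exact Finset.sum_nonneg fun k _ => mul_nonneg (hA i k) (hB k j)

lemma pow_entry_nonneg {A : Matrix (Fin N) (Fin N) ℝ}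
    (hA : ∀ i j, 0 ≤ A i j) : ∀ n, ∀ i j, 0 ≤ (A ^ n) i j := by
  intro n
  induction n with
  | zero =>
    intro i j
    rcases eq_or_ne i j with rfl | h
    · simp [pow_zero, Matrix.one_apply_eq]
    · simp [pow_zero, Matrix.one_apply_ne h]
  | succ n ih =>
    rw [pow_succ]
    exact mul_entry_nonneg ih hA

lemma mul_entry_le {t : ℝ} (ht0 : 0 ≤ t) (ht1 : t ≤ 1)
    {A₁ A₂ B₁ B₂ C₁ C₂ : Matrix (Fin N) (Fin N) ℝ}
    (hA₁ : ∀ i j, 0 ≤ A₁ i j) (hA₂ : ∀ i j, 0 ≤ A₂ i j)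
    (hB₁ : ∀ i j, 0 ≤ B₁ i j) (hB₂ : ∀ i j, 0 ≤ B₂ i j)
    (hC₂0 : ∀ i j, 0 ≤ C₂ i j)
    (h₁ : ∀ i j, C₁ i j ≤ A₁ i j ^ t * B₁ i j ^ (1 - t))
    (h₂ : ∀ i j, C₂ i j ≤ A₂ i j ^ t * B₂ i j ^ (1 - t)) :
    ∀ i j, (C₁ * C₂) i j ≤ ((A₁ * A₂) i j) ^ t * ((B₁ * B₂) i j) ^ (1 - t) := by
  intro i j
  rw [Matrix.mul_apply, Matrix.mul_apply, Matrix.mul_apply]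
  calc ∑ k, C₁ i k * C₂ k j
      ≤ ∑ k, (A₁ i k * A₂ k j) ^ t * (B₁ i k * B₂ k j) ^ (1 - t) := by
        refine Finset.sum_le_sum fun k _ => ?_
        calc C₁ i k * C₂ k j
            ≤ (A₁ i k ^ t * B₁ i k ^ (1 - t)) * (A₂ k j ^ t * B₂ k j ^ (1 - t)) :=
              mul_le_mul (h₁ i k) (h₂ k j) (hC₂0 k j)
                (mul_nonneg (Real.rpow_nonneg (hA₁ i k) t)
                  (Real.rpow_nonneg (hB₁ i k) (1 - t)))
          _ = (A₁ i k * A₂ k j) ^ t * (B₁ i k * B₂ k j) ^ (1 - t) := by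
              rw [Real.mul_rpow (hA₁ i k) (hA₂ k j), Real.mul_rpow (hB₁ i k) (hB₂ k j)]
              ring
    _ ≤ (∑ k, A₁ i k * A₂ k j) ^ t * (∑ k, B₁ i k * B₂ k j) ^ (1 - t) :=
        sum_rpow_holder _ _ _ (fun k _ => mul_nonneg (hA₁ i k) (hA₂ k j))
          (fun k _ => mul_nonneg (hB₁ i k) (hB₂ k j)) ht0 ht1

lemma pow_entry_le {t : ℝ} (ht0 : 0 ≤ t) (ht1 : t ≤ 1)
    {A B C : Matrix (Fin N) (Fin N) ℝ}
    (hA : ∀ i j, 0 ≤ A i j) (hB : ∀ i j, 0 ≤ B i j) (hC0 : ∀ i j, 0 ≤ C i j)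
    (hC : ∀ i j, C i j ≤ A i j ^ t * B i j ^ (1 - t)) :
    ∀ n, ∀ i j, (C ^ n) i j ≤ ((A ^ n) i j) ^ t * ((B ^ n) i j) ^ (1 - t) := by
  intro n
  induction n with
  | zero =>
    intro i j
    rcases eq_or_ne i j with rfl | h
    · simp [pow_zero, Matrix.one_apply_eq]
    · simp only [pow_zero, Matrix.one_apply_ne h]
      exact mul_nonneg (Real.rpow_nonneg le_rfl t) (Real.rpow_nonneg le_rfl (1 - t))
  | succ n ih =>
    rw [pow_succ, pow_succ, pow_succ]
    exact mul_entry_le ht0 ht1 (pow_entry_nonneg hA n) hA (pow_entry_nonneg hB n) hB hC0 ih hC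

lemma map_ofReal_pow (M : Matrix (Fin N) (Fin N) ℝ) (n : ℕ) :
    (M.map (Complex.ofReal)) ^ n = (M ^ n).map (Complex.ofReal) := by
  have h : ∀ P : Matrix (Fin N) (Fin N) ℝ, P.map (Complex.ofReal) =
      (Complex.ofRealHom.mapMatrix : Matrix (Fin N) (Fin N) ℝ →+* _) P := fun P => rfl
  rw [h, h, map_pow]

lemma rowsum_le_norm {M : Matrix (Fin N) (Fin N) ℝ} (hM : ∀ i j, 0 ≤ M i j) (i : Fin N) :
    ∑ j, M i j ≤ ‖M.map (Complex.ofReal)‖ := by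
  rw [Matrix.linfty_opNorm_def]
  have h : (fun i => ∑ j, ‖(M.map (Complex.ofReal)) i j‖₊) i ≤
      (Finset.univ : Finset (Fin N)).sup fun i => ∑ j, ‖(M.map (Complex.ofReal)) i j‖₊ :=
    Finset.le_sup (f := fun i => ∑ j, ‖(M.map (Complex.ofReal)) i j‖₊) (Finset.mem_univ i)
  have h' := NNReal.coe_le_coe.2 h
  refine le_trans (le_of_eq ?_) h'
  push_cast
  refine Finset.sum_congr rfl fun j _ => ?_
  rw [Matrix.map_apply, Complex.norm_real, Real.norm_of_nonneg (hM i j)]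

lemma norm_le_of_rowsum_le {M : Matrix (Fin N) (Fin N) ℝ} (hM : ∀ i j, 0 ≤ M i j)
    {c : ℝ} (hc : 0 ≤ c) (h : ∀ i, ∑ j, M i j ≤ c) : ‖M.map (Complex.ofReal)‖ ≤ c := by
  rw [Matrix.linfty_opNorm_def]
  have : ((Finset.univ : Finset (Fin N)).sup fun i => ∑ j, ‖(M.map (Complex.ofReal)) i j‖₊) ≤
      ⟨c, hc⟩ := by
    refine Finset.sup_le fun i _ => ?_
    apply NNReal.coe_le_coe.1
    push_cast
    refine le_trans (le_of_eq ?_) (h i)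
    refine Finset.sum_congr rfl fun j _ => ?_
    rw [Matrix.map_apply, Complex.norm_real, Real.norm_of_nonneg (hM i j)]
  exact_mod_cast this

lemma specRad_nonneg (M : Matrix (Fin N) (Fin N) ℝ) : 0 ≤ specRad M :=
  ENNReal.toReal_nonneg

lemma spectralRadius_ne_top (M : Matrix (Fin N) (Fin N) ℂ) :
    spectralRadius ℂ M ≠ ⊤ := by
  refine ne_top_of_le_ne_top ?_ (spectrum.spectralRadius_le_pow_nnnorm_pow_one_div ℂ M 0)
  exact ENNReal.mul_ne_top
    (ENNReal.rpow_ne_top_of_nonneg (by norm_num) ENNReal.coe_ne_top)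
    (ENNReal.rpow_ne_top_of_nonneg (by norm_num) ENNReal.coe_ne_top)

/-- Key inequality: if `C ≤ A^{(t)} ∘ B^{(1-t)}` entrywise (all nonnegative), then
`r(C) ≤ r(A)^t r(B)^(1-t)`. -/
lemma specRad_le_geom {t : ℝ} (ht0 : 0 ≤ t) (ht1 : t ≤ 1)
    {A B C : Matrix (Fin N) (Fin N) ℝ}
    (hA : ∀ i j, 0 ≤ A i j) (hB : ∀ i j, 0 ≤ B i j) (hC0 : ∀ i j, 0 ≤ C i j)
    (hC : ∀ i j, C i j ≤ A i j ^ t * B i j ^ (1 - t)) :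
    specRad C ≤ specRad A ^ t * specRad B ^ (1 - t) := by
  classical
  set Ac := A.map (Complex.ofReal) with hAc
  set Bc := B.map (Complex.ofReal) with hBc
  set Cc := C.map (Complex.ofReal) with hCc
  have hnorm : ∀ n : ℕ, ‖Cc ^ n‖ ≤ ‖Ac ^ n‖ ^ t * ‖Bc ^ n‖ ^ (1 - t) := by
    intro n
    rw [hAc, hBc, hCc, map_ofReal_pow, map_ofReal_pow, map_ofReal_pow]
    refine norm_le_of_rowsum_le (pow_entry_nonneg hC0 n)
      (mul_nonneg (Real.rpow_nonneg (norm_nonneg _) t)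
        (Real.rpow_nonneg (norm_nonneg _) (1 - t))) fun i => ?_
    calc ∑ j, (C ^ n) i j
        ≤ ∑ j, ((A ^ n) i j) ^ t * ((B ^ n) i j) ^ (1 - t) :=
          Finset.sum_le_sum fun j _ => pow_entry_le ht0 ht1 hA hB hC0 hC n i j
      _ ≤ (∑ j, (A ^ n) i j) ^ t * (∑ j, (B ^ n) i j) ^ (1 - t) :=
          sum_rpow_holder _ _ _ (fun j _ => pow_entry_nonneg hA n i j)
            (fun j _ => pow_entry_nonneg hB n i j) ht0 ht1
      _ ≤ ‖(A ^ n).map (Complex.ofReal)‖ ^ t * ‖(B ^ n).map (Complex.ofReal)‖ ^ (1 - t) := by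
          refine mul_le_mul
            (Real.rpow_le_rpow (Finset.sum_nonneg fun j _ => pow_entry_nonneg hA n i j)
              (rowsum_le_norm (pow_entry_nonneg hA n) i) ht0)
            (Real.rpow_le_rpow (Finset.sum_nonneg fun j _ => pow_entry_nonneg hB n i j)
              (rowsum_le_norm (pow_entry_nonneg hB n) i) (by linarith))
            (Real.rpow_nonneg (Finset.sum_nonneg fun j _ => pow_entry_nonneg hB n i j) _)
            (Real.rpow_nonneg (norm_nonneg _) _)
  -- nnnorm version
  have hnn : ∀ n : ℕ, ‖Cc ^ n‖₊ ≤ ‖Ac ^ n‖₊ ^ t * ‖Bc ^ n‖₊ ^ (1 - t) := by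
    intro n
    rw [← NNReal.coe_le_coe]
    push_cast [NNReal.coe_rpow]
    exact hnorm n
  set rA := spectralRadius ℂ Ac with hrA
  set rB := spectralRadius ℂ Bc with hrB
  set rC := spectralRadius ℂ Cc with hrC
  have hAfin : rA ≠ ⊤ := spectralRadius_ne_top Ac
  have hBfin : rB ≠ ⊤ := spectralRadius_ne_top Bc
  have key : rC ≤ rA ^ t * rB ^ (1 - t) := by
    have h1 : rC ≤ atTop.liminf fun n : ℕ => (‖Cc ^ n‖₊ : ℝ≥0∞) ^ (1 / n : ℝ) :=
      spectrum.spectralRadius_le_liminf_pow_nnnorm_pow_one_div ℂ Cc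
    have h2 : ∀ n : ℕ, (‖Cc ^ n‖₊ : ℝ≥0∞) ^ (1 / n : ℝ) ≤
        ((‖Ac ^ n‖₊ : ℝ≥0∞) ^ (1 / n : ℝ)) ^ t * ((‖Bc ^ n‖₊ : ℝ≥0∞) ^ (1 / n : ℝ)) ^ (1 - t) := by
      intro n
      have hb : (‖Cc ^ n‖₊ : ℝ≥0∞) ≤ (‖Ac ^ n‖₊ : ℝ≥0∞) ^ t * (‖Bc ^ n‖₊ : ℝ≥0∞) ^ (1 - t) := by
        rw [← ENNReal.coe_rpow_of_nonneg _ ht0, ← ENNReal.coe_rpow_of_nonneg _ (by linarith),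
          ← ENNReal.coe_mul]
        exact_mod_cast hnn n
      have := ENNReal.rpow_le_rpow hb (by positivity : (0:ℝ) ≤ 1 / n)
      rw [ENNReal.mul_rpow_of_nonneg _ _ (by positivity : (0:ℝ) ≤ 1 / n)] at this
      refine le_trans this (le_of_eq ?_)
      rw [← ENNReal.rpow_mul, ← ENNReal.rpow_mul, ← ENNReal.rpow_mul, ← ENNReal.rpow_mul,
        mul_comm t (1 / n : ℝ), mul_comm (1 - t) (1 / n : ℝ)]
    have hglA := spectrum.pow_nnnorm_pow_one_div_tendsto_nhds_spectralRadius Ac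
    have hglB := spectrum.pow_nnnorm_pow_one_div_tendsto_nhds_spectralRadius Bc
    have h3 : Tendsto (fun n : ℕ => ((‖Ac ^ n‖₊ : ℝ≥0∞) ^ (1 / n : ℝ)) ^ t *
        ((‖Bc ^ n‖₊ : ℝ≥0∞) ^ (1 / n : ℝ)) ^ (1 - t)) atTop (𝓝 (rA ^ t * rB ^ (1 - t))) := by
      refine ENNReal.Tendsto.mul (hglA.ennrpow_const t) ?_ (hglB.ennrpow_const (1 - t)) ?_
      · exact Or.inr (ENNReal.rpow_ne_top_of_nonneg (by linarith) hBfin)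
      · exact Or.inr (ENNReal.rpow_ne_top_of_nonneg ht0 hAfin)
    calc rC ≤ atTop.liminf fun n : ℕ => (‖Cc ^ n‖₊ : ℝ≥0∞) ^ (1 / n : ℝ) := h1
      _ ≤ atTop.liminf fun n : ℕ => ((‖Ac ^ n‖₊ : ℝ≥0∞) ^ (1 / n : ℝ)) ^ t *
          ((‖Bc ^ n‖₊ : ℝ≥0∞) ^ (1 / n : ℝ)) ^ (1 - t) :=
        Filter.liminf_le_liminf (Filter.Eventually.of_forall h2)
      _ = rA ^ t * rB ^ (1 - t) := h3.liminf_eq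
  have hRfin : rA ^ t * rB ^ (1 - t) ≠ ⊤ :=
    ENNReal.mul_ne_top (ENNReal.rpow_ne_top_of_nonneg ht0 hAfin)
      (ENNReal.rpow_ne_top_of_nonneg (by linarith) hBfin)
  show rC.toReal ≤ rA.toReal ^ t * rB.toReal ^ (1 - t)
  rw [ENNReal.toReal_rpow, ENNReal.toReal_rpow, ← ENNReal.toReal_mul]
  exact (ENNReal.toReal_le_toReal (ne_top_of_le_ne_top hRfin key) hRfin).2 key

lemma wgs_nonneg {K : Matrix (Fin N) (Fin N) ℝ} (hK : ∀ i j, 0 ≤ K i j) (α : ℝ) :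
    ∀ i j, 0 ≤ wgs α K i j := fun i j =>
  mul_nonneg (Real.rpow_nonneg (hK i j) _) (Real.rpow_nonneg (hK j i) _)

lemma wgs_entry_convex {K : Matrix (Fin N) (Fin N) ℝ} (hK : ∀ i j, 0 ≤ K i j)
    {α β t : ℝ} (hα : 0 ≤ α) (hα1 : α ≤ 1) (hβ : 0 ≤ β) (hβ1 : β ≤ 1)
    (ht0 : 0 ≤ t) (ht1 : t ≤ 1) (i j : Fin N) :
    wgs (t * α + (1 - t) * β) K i j = (wgs α K i j) ^ t * (wgs β K i j) ^ (1 - t) := by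
  simp only [wgs, Matrix.of_apply]
  have hx := hK i j
  have hy := hK j i
  rw [Real.mul_rpow (Real.rpow_nonneg hx α) (Real.rpow_nonneg hy (1 - α)),
    Real.mul_rpow (Real.rpow_nonneg hx β) (Real.rpow_nonneg hy (1 - β)),
    ← Real.rpow_mul hx, ← Real.rpow_mul hy, ← Real.rpow_mul hx, ← Real.rpow_mul hy]
  rw [show t * α + (1 - t) * β = α * t + β * (1 - t) by ring,
    show 1 - (α * t + β * (1 - t)) = (1 - α) * t + (1 - β) * (1 - t) by ring,
    Real.rpow_add_of_nonneg hx (mul_nonneg hα ht0) (mul_nonneg hβ (by linarith)),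
    Real.rpow_add_of_nonneg hy (mul_nonneg (by linarith) ht0)
      (mul_nonneg (by linarith) (by linarith))]
  ring

lemma specRad_prod_convex {K₁ K₂ : Matrix (Fin N) (Fin N) ℝ}
    (hK₁ : ∀ i j, 0 ≤ K₁ i j) (hK₂ : ∀ i j, 0 ≤ K₂ i j)
    {α β t : ℝ} (hα : 0 ≤ α) (hα1 : α ≤ 1) (hβ : 0 ≤ β) (hβ1 : β ≤ 1)
    (ht0 : 0 ≤ t) (ht1 : t ≤ 1) :
    specRad (wgs (t * α + (1 - t) * β) K₁ * wgs (t * α + (1 - t) * β) K₂) ≤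
      specRad (wgs α K₁ * wgs α K₂) ^ t * specRad (wgs β K₁ * wgs β K₂) ^ (1 - t) := by
  refine specRad_le_geom ht0 ht1
    (mul_entry_nonneg (wgs_nonneg hK₁ α) (wgs_nonneg hK₂ α))
    (mul_entry_nonneg (wgs_nonneg hK₁ β) (wgs_nonneg hK₂ β))
    (mul_entry_nonneg (wgs_nonneg hK₁ _) (wgs_nonneg hK₂ _)) ?_
  exact mul_entry_le ht0 ht1 (wgs_nonneg hK₁ α) (wgs_nonneg hK₂ α)
    (wgs_nonneg hK₁ β) (wgs_nonneg hK₂ β) (wgs_nonneg hK₂ _)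
    (fun i j => le_of_eq (wgs_entry_convex hK₁ hα hα1 hβ hβ1 ht0 ht1 i j))
    (fun i j => le_of_eq (wgs_entry_convex hK₂ hα hα1 hβ hβ1 ht0 ht1 i j))

lemma spectrum_transpose (A : Matrix (Fin N) (Fin N) ℂ) :
    spectrum ℂ Aᵀ = spectrum ℂ A := by
  ext k
  simp only [spectrum.mem_iff]
  have h : algebraMap ℂ (Matrix (Fin N) (Fin N) ℂ) k - Aᵀ =
      (algebraMap ℂ (Matrix (Fin N) (Fin N) ℂ) k - A)ᵀ := by
    rw [Matrix.transpose_sub, Algebra.algebraMap_eq_smul_one, Matrix.transpose_smul,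
      Matrix.transpose_one]
  rw [h, Matrix.isUnit_iff_isUnit_det, Matrix.det_transpose, ← Matrix.isUnit_iff_isUnit_det]

lemma specRad_transpose (M : Matrix (Fin N) (Fin N) ℝ) : specRad Mᵀ = specRad M := by
  unfold specRad
  rw [show Mᵀ.map (Complex.ofReal) = (M.map (Complex.ofReal))ᵀ from Matrix.transpose_map]
  unfold spectralRadius
  rw [spectrum_transpose]

lemma wgs_one_sub (K : Matrix (Fin N) (Fin N) ℝ) (α : ℝ) :
    wgs (1 - α) K = (wgs α K)ᵀ := by
  ext i j
  simp only [wgs, Matrix.of_apply, Matrix.transpose_apply, sub_sub_cancel]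
  ring

/-- The function under the square root. -/
noncomputable def fK (K₁ K₂ : Matrix (Fin N) (Fin N) ℝ) (α : ℝ) : ℝ :=
  specRad (wgs α K₁ * wgs α K₂) * specRad (wgs α K₂ * wgs α K₁)

lemma rho2_eq_sqrt_fK (K₁ K₂ : Matrix (Fin N) (Fin N) ℝ) (α : ℝ) :
    rho2 K₁ K₂ α = Real.sqrt (fK K₁ K₂ α) := rfl

lemma fK_nonneg (K₁ K₂ : Matrix (Fin N) (Fin N) ℝ) (α : ℝ) : 0 ≤ fK K₁ K₂ α :=
  mul_nonneg (specRad_nonneg _) (specRad_nonneg _)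

lemma fK_symm (K₁ K₂ : Matrix (Fin N) (Fin N) ℝ) (α : ℝ) :
    fK K₁ K₂ (1 - α) = fK K₁ K₂ α := by
  unfold fK
  rw [wgs_one_sub, wgs_one_sub, ← Matrix.transpose_mul, ← Matrix.transpose_mul,
    specRad_transpose, specRad_transpose, mul_comm]

lemma fK_convex {K₁ K₂ : Matrix (Fin N) (Fin N) ℝ}
    (hK₁ : ∀ i j, 0 ≤ K₁ i j) (hK₂ : ∀ i j, 0 ≤ K₂ i j)
    {α β t : ℝ} (hα : 0 ≤ α) (hα1 : α ≤ 1) (hβ : 0 ≤ β) (hβ1 : β ≤ 1)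
    (ht0 : 0 ≤ t) (ht1 : t ≤ 1) :
    fK K₁ K₂ (t * α + (1 - t) * β) ≤ fK K₁ K₂ α ^ t * fK K₁ K₂ β ^ (1 - t) := by
  have h1 := specRad_prod_convex hK₁ hK₂ hα hα1 hβ hβ1 ht0 ht1
  have h2 := specRad_prod_convex hK₂ hK₁ hα hα1 hβ hβ1 ht0 ht1
  unfold fK
  calc specRad (wgs (t * α + (1 - t) * β) K₁ * wgs (t * α + (1 - t) * β) K₂) *
        specRad (wgs (t * α + (1 - t) * β) K₂ * wgs (t * α + (1 - t) * β) K₁)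
      ≤ (specRad (wgs α K₁ * wgs α K₂) ^ t * specRad (wgs β K₁ * wgs β K₂) ^ (1 - t)) *
        (specRad (wgs α K₂ * wgs α K₁) ^ t * specRad (wgs β K₂ * wgs β K₁) ^ (1 - t)) :=
      mul_le_mul h1 h2 (specRad_nonneg _)
        (mul_nonneg (Real.rpow_nonneg (specRad_nonneg _) t)
          (Real.rpow_nonneg (specRad_nonneg _) (1 - t)))
    _ = (specRad (wgs α K₁ * wgs α K₂) * specRad (wgs α K₂ * wgs α K₁)) ^ t *
        (specRad (wgs β K₁ * wgs β K₂) * specRad (wgs β K₂ * wgs β K₁)) ^ (1 - t) := by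
      rw [Real.mul_rpow (specRad_nonneg _) (specRad_nonneg _),
        Real.mul_rpow (specRad_nonneg _) (specRad_nonneg _)]
      ring

lemma fK_le {K₁ K₂ : Matrix (Fin N) (Fin N) ℝ}
    (hK₁ : ∀ i j, 0 ≤ K₁ i j) (hK₂ : ∀ i j, 0 ≤ K₂ i j)
    {a b : ℝ} (ha : 0 ≤ a) (hab : a ≤ b) (hb : b ≤ 1 / 2) :
    fK K₁ K₂ b ≤ fK K₁ K₂ a := by
  rcases eq_or_lt_of_le (hab.trans hb) with h | h
  · have hba : b = a := le_antisymm (by linarith) hab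
    rw [hba]
  · have hden : 0 < 1 - 2 * a := by linarith
    set t := (1 - a - b) / (1 - 2 * a) with ht
    have ht0 : 0 ≤ t := div_nonneg (by linarith) hden.le
    have ht1 : t ≤ 1 := by rw [ht, div_le_one hden]; linarith
    have hcomb : t * a + (1 - t) * (1 - a) = b := by
      rw [ht, div_mul_eq_mul_div, one_sub_div hden.ne', div_mul_eq_mul_div, ← add_div,
        div_eq_iff hden.ne']; ring
    have hconv := fK_convex hK₁ hK₂ (α := a) (β := 1 - a) ha (by linarith) (by linarith)
      (by linarith) ht0 ht1
    rw [hcomb, fK_symm] at hconv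
    calc fK K₁ K₂ b ≤ fK K₁ K₂ a ^ t * fK K₁ K₂ a ^ (1 - t) := hconv
      _ = fK K₁ K₂ a := by
        rw [← Real.rpow_add_of_nonneg (fK_nonneg K₁ K₂ a) ht0 (by linarith),
          show t + (1 - t) = 1 by ring, Real.rpow_one]

lemma rho2_le {K₁ K₂ : Matrix (Fin N) (Fin N) ℝ}
    (hK₁ : ∀ i j, 0 ≤ K₁ i j) (hK₂ : ∀ i j, 0 ≤ K₂ i j)
    {a b : ℝ} (ha : 0 ≤ a) (hab : a ≤ b) (hb : b ≤ 1 / 2) :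
    rho2 K₁ K₂ b ≤ rho2 K₁ K₂ a := by
  rw [rho2_eq_sqrt_fK, rho2_eq_sqrt_fK]
  exact Real.sqrt_le_sqrt (fK_le hK₁ hK₂ ha hab hb)

lemma rho2_symm (K₁ K₂ : Matrix (Fin N) (Fin N) ℝ) (α : ℝ) :
    rho2 K₁ K₂ (1 - α) = rho2 K₁ K₂ α := by
  rw [rho2_eq_sqrt_fK, rho2_eq_sqrt_fK, fK_symm]

end Rho2Aux

/-- `ρ₂` is decreasing on `[0, 1/2]`, increasing on `[1/2, 1]`, and in
particular `ρ₂(α) ≥ ρ₂(1/2)` for all `α ∈ [0,1]`. -/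
theorem rho2_monotonicity {N : ℕ} (K₁ K₂ : Matrix (Fin N) (Fin N) ℝ)
    (hK₁ : ∀ i j, 0 ≤ K₁ i j) (hK₂ : ∀ i j, 0 ≤ K₂ i j) :
    (∀ a b : ℝ, 0 ≤ a → a ≤ b → b ≤ 1 / 2 → rho2 K₁ K₂ b ≤ rho2 K₁ K₂ a) ∧
    (∀ a b : ℝ, 1 / 2 ≤ a → a ≤ b → b ≤ 1 → rho2 K₁ K₂ a ≤ rho2 K₁ K₂ b) ∧
    (∀ α : ℝ, 0 ≤ α → α ≤ 1 → rho2 K₁ K₂ (1 / 2) ≤ rho2 K₁ K₂ α) := by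
  have hdec : ∀ a b : ℝ, 0 ≤ a → a ≤ b → b ≤ 1 / 2 → rho2 K₁ K₂ b ≤ rho2 K₁ K₂ a :=
    fun a b ha hab hb => Rho2Aux.rho2_le hK₁ hK₂ ha hab hb
  have hinc : ∀ a b : ℝ, 1 / 2 ≤ a → a ≤ b → b ≤ 1 → rho2 K₁ K₂ a ≤ rho2 K₁ K₂ b := by
    intro a b ha hab hb
    rw [← Rho2Aux.rho2_symm K₁ K₂ a, ← Rho2Aux.rho2_symm K₁ K₂ b]
    exact hdec (1 - b) (1 - a) (by linarith) (by linarith) (by linarith)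
  refine ⟨hdec, hinc, fun α h0 h1 => ?_⟩
  rcases le_total α (1 / 2) with h | h
  · exact hdec α (1 / 2) h0 h le_rfl
  · exact hinc (1 / 2) α le_rfl h h1
end
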